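/- Let n ≥ 3 be an integer, F : ℝ^n → ℂ an ℝ-linear map with ker F ∩ ℤ^n = {0}. Then there exists a constant c > 0, depending only on n and F, such that for every δ ∈ (0,1] there is a nonzero b ∈ ℤ^n with ‖b‖₂ ≤ c·δ^{−2/(n−2)} and 0 < |F(b)| ≤ δ. -/

import Mathlib

/-- The point of `ℝ^n` (with Euclidean norm) corresponding to an integer vector. -/
def latticeVec (n : ℕ) (b : Fin n → ℤ) : EuclideanSpace ℝ (Fin n) := WithLp.toLp 2 (fun i => (b i : ℝ))

lemma latticeVec_norm_le (n M : ℕ) (b : Fin n → ℤ) (h : ∀ i, |b i| ≤ (M:ℤ)) :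
    ‖latticeVec n b‖ ≤ Real.sqrt n * M := by
  rw [EuclideanSpace.norm_eq]
  have : ∑ i, ‖latticeVec n b i‖ ^ 2 ≤ (n : ℝ) * (M:ℝ)^2 := by
    calc ∑ i, ‖latticeVec n b i‖ ^ 2 ≤ ∑ _i : Fin n, (M:ℝ)^2 := by
          apply Finset.sum_le_sum
          intro i _
          have hb : |(b i : ℝ)| ≤ (M:ℝ) := by exact_mod_cast h i
          have : ‖latticeVec n b i‖ = |(b i : ℝ)| := by
            simp [latticeVec, Real.norm_eq_abs]
          rw [this]
          calc |(b i : ℝ)|^2 = |(b i : ℝ)| * |(b i : ℝ)| := sq (|(b i : ℝ)|) ▸ by ring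
            _ ≤ (M:ℝ) * (M:ℝ) := by
              apply mul_le_mul hb hb (abs_nonneg _) (Nat.cast_nonneg _)
            _ = (M:ℝ)^2 := by ring
      _ = (n : ℝ) * (M:ℝ)^2 := by simp [Finset.sum_const, mul_comm]
  calc Real.sqrt (∑ i, ‖latticeVec n b i‖ ^ 2) ≤ Real.sqrt ((n:ℝ) * (M:ℝ)^2) :=
        Real.sqrt_le_sqrt this
    _ = Real.sqrt n * M := by
        rw [Real.sqrt_mul (Nat.cast_nonneg n), Real.sqrt_sq (Nat.cast_nonneg M)]

lemma floor_eq_abs_sub_lt (x y : ℝ) (h : ⌊x⌋ = ⌊y⌋) : |x - y| < 1 := by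
  have h1 := Int.floor_le x
  have h2 := Int.lt_floor_add_one x
  have h3 := Int.floor_le y
  have h4 := Int.lt_floor_add_one y
  rw [h] at h1 h2
  rw [abs_lt]; constructor <;> linarith

/-- Lemma 3.1: Let `n ≥ 3` be an integer and `F : ℝ^n → ℂ` an `ℝ`-linear map with
`ker F ∩ ℤ^n = {0}`. There is `c > 0`, depending only on `n` and `F`, such that for
every `δ ∈ (0,1]` there is a nonzero `b ∈ ℤ^n` with `‖b‖₂ ≤ c·δ^{-2/(n-2)}` and
`0 < |F(b)| ≤ δ`. -/
theorem exists_small_nonzero_value (n : ℕ) (hn : 3 ≤ n)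
    (F : EuclideanSpace ℝ (Fin n) →ₗ[ℝ] ℂ)
    (hker : ∀ b : Fin n → ℤ, F (latticeVec n b) = 0 → b = 0) :
    ∃ c > (0 : ℝ), ∀ δ : ℝ, 0 < δ → δ ≤ 1 →
      ∃ b : Fin n → ℤ, b ≠ 0 ∧
        ‖latticeVec n b‖ ≤ c * δ ^ (-2 / ((n : ℝ) - 2)) ∧
        0 < ‖F (latticeVec n b)‖ ∧
        ‖F (latticeVec n b)‖ ≤ δ := by
  -- operator norm bound
  set A : ℝ := ‖LinearMap.toContinuousLinearMap F‖ with hA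
  have hA0 : 0 ≤ A := norm_nonneg _
  have hFb : ∀ x, ‖F x‖ ≤ A * ‖x‖ := fun x => (LinearMap.toContinuousLinearMap F).le_opNorm x
  have hn2 : (0:ℝ) < (n:ℝ) - 2 := by
    have : (3:ℝ) ≤ n := by exact_mod_cast hn
    linarith
  set e : ℝ := 2 / ((n:ℝ) - 2) with he
  have he0 : 0 < e := by positivity
  set K : ℝ := 4 * A * Real.sqrt n + 2 with hK
  have hK2 : (2:ℝ) ≤ K := by
    have : 0 ≤ 4 * A * Real.sqrt n := by positivity
    linarith
  have hK0 : 0 < K := by linarith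
  refine ⟨2 * Real.sqrt n * K ^ e, by positivity, ?_⟩
  intro δ hδ0 hδ1
  set x : ℝ := (K / δ) ^ e with hx
  have hKδ1 : 1 ≤ K / δ := by
    rw [le_div_iff₀ hδ0]; linarith
  have hx1 : 1 ≤ x := Real.one_le_rpow hKδ1 he0.le
  set M : ℕ := ⌈x⌉₊ with hM
  have hM1 : 1 ≤ M := by
    rw [hM, Nat.one_le_ceil_iff]; linarith
  have hMx : (M:ℝ) ≤ x + 1 := by
    have := Nat.ceil_lt_add_one (by linarith : (0:ℝ) ≤ x)
    exact this.le
  have hxM : x ≤ (M:ℝ) := Nat.le_ceil x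
  have hM0 : (0:ℝ) < M := by exact_mod_cast hM1
  have hKδ0 : (0:ℝ) < K / δ := div_pos hK0 hδ0
  -- key counting inequality: (K*M/δ)^2 ≤ M^n
  have hkey : (K * M / δ)^2 ≤ (M:ℝ)^n := by
    have h1 : (K/δ)^(2:ℝ) ≤ (M:ℝ) ^ ((n:ℝ) - 2) := by
      have heq : (K/δ)^(2:ℝ) = x ^ ((n:ℝ) - 2) := by
        rw [hx, ← Real.rpow_mul hKδ0.le]
        congr 1
        rw [he]; field_simp
      rw [heq]
      exact Real.rpow_le_rpow (by linarith) hxM hn2.le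
    have h2 : (K * M / δ)^2 = (K/δ)^(2:ℝ) * (M:ℝ)^(2:ℝ) := by
      rw [Real.rpow_two, Real.rpow_two]
      ring
    have h3 : (M:ℝ) ^ ((n:ℝ) - 2) * (M:ℝ)^(2:ℝ) = (M:ℝ)^n := by
      rw [← Real.rpow_add hM0, ← Real.rpow_natCast (M:ℝ) n]
      congr 1; ring
    rw [h2, ← h3]
    have : (0:ℝ) ≤ (M:ℝ)^(2:ℝ) := Real.rpow_nonneg hM0.le 2
    exact mul_le_mul_of_nonneg_right h1 this
  -- pigeonhole setup
  set s : ℝ := δ / 2 with hs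
  have hs0 : 0 < s := by rw [hs]; linarith
  set R : ℝ := Real.sqrt n * M with hR
  have hR0 : 0 ≤ R := by positivity
  set lv : (Fin n → ℕ) → EuclideanSpace ℝ (Fin n) :=
    fun v => latticeVec n (fun i => (v i : ℤ)) with hlv
  set g : (Fin n → ℕ) → ℤ × ℤ :=
    fun v => (⌊(F (lv v)).re / s⌋, ⌊(F (lv v)).im / s⌋) with hg
  set lo : ℤ := ⌊(-(A * R)) / s⌋ with hlo
  set hi : ℤ := ⌊(A * R) / s⌋ with hhi
  set S : Finset (Fin n → ℕ) := Fintype.piFinset (fun _ => Finset.range (M+1)) with hS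
  set T : Finset (ℤ × ℤ) := Finset.Icc lo hi ×ˢ Finset.Icc lo hi with hT
  have hScard : S.card = (M+1)^n := by simp [hS]
  -- bound on the cardinality of an Icc
  have hIcc : ((Finset.Icc lo hi).card : ℝ) ≤ K * M / δ := by
    have hb : 2 * (A * R / s) + 2 ≤ K * M / δ := by
      have hMδ : 1 ≤ (M:ℝ) / δ := by
        rw [le_div_iff₀ hδ0]
        have : (1:ℝ) ≤ M := by exact_mod_cast hM1
        linarith
      have h1 : 2 * (A * R / s) = 4 * A * Real.sqrt n * ((M:ℝ)/δ) := by
        rw [hR, hs]; field_simp; ring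
      have h2 : K * M / δ = 4 * A * Real.sqrt n * ((M:ℝ)/δ) + 2 * ((M:ℝ)/δ) := by
        rw [hK]; field_simp
      rw [h1, h2]
      have : 0 ≤ 4 * A * Real.sqrt n * ((M:ℝ)/δ) := by positivity
      linarith
    rw [Int.card_Icc]
    rcases le_or_gt (hi + 1 - lo) 0 with h | h
    · rw [Int.toNat_of_nonpos h]
      have : (0:ℝ) ≤ 2 * (A * R / s) := by positivity
      simpa using le_trans (by linarith) hb
    · have h4 : ((hi + 1 - lo).toNat : ℤ) = hi + 1 - lo := Int.toNat_of_nonneg h.le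
      have h5 : ((hi + 1 - lo).toNat : ℝ) = (hi:ℝ) + 1 - lo := by
        exact_mod_cast congrArg (Int.cast : ℤ → ℝ) h4
      have h1 : (hi:ℝ) ≤ A * R / s := Int.floor_le _
      have h2 : (-(A * R)) / s - 1 < (lo:ℝ) := Int.sub_one_lt_floor _
      have h3 : (-(A*R))/s = -(A*R/s) := by ring
      rw [h5]
      rw [h3] at h2
      linarith
  -- T.card < S.card
  have hTcard : T.card < S.card := by
    have hTc : (T.card : ℝ) ≤ (K * M / δ)^2 := by
      rw [hT, Finset.card_product]
      push_cast
      have h0 : (0:ℝ) ≤ ((Finset.Icc lo hi).card : ℝ) := Nat.cast_nonneg _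
      calc ((Finset.Icc lo hi).card : ℝ) * ((Finset.Icc lo hi).card : ℝ)
          ≤ (K * M / δ) * (K * M / δ) := by
            apply mul_le_mul hIcc hIcc h0 (le_trans h0 hIcc)
        _ = (K * M / δ)^2 := by ring
    have hlt : ((M:ℝ))^n < ((M:ℝ)+1)^n := by
      apply pow_lt_pow_left₀ (by linarith) hM0.le (by omega)
    have : (T.card : ℝ) < ((M+1:ℕ):ℝ)^n := by
      push_cast
      exact lt_of_le_of_lt (le_trans hTc hkey) hlt
    rw [hScard]
    exact_mod_cast this
  -- the map lands in T
  have hmaps : ∀ v ∈ S, g v ∈ T := by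
    intro v hv
    have hvi : ∀ i, |(v i : ℤ)| ≤ (M:ℤ) := by
      intro i
      have : v i ∈ Finset.range (M+1) := by
        rw [hS, Fintype.mem_piFinset] at hv
        exact hv i
      rw [Finset.mem_range] at this
      simp only [abs_of_nonneg (Int.ofNat_nonneg (v i))]
      exact_mod_cast Nat.lt_succ_iff.mp this
    have hnorm : ‖lv v‖ ≤ R := by
      rw [hR]; exact latticeVec_norm_le n M _ hvi
    have hFv : ‖F (lv v)‖ ≤ A * R := by
      calc ‖F (lv v)‖ ≤ A * ‖lv v‖ := hFb _
        _ ≤ A * R := by apply mul_le_mul_of_nonneg_left hnorm hA0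
    have hre : |(F (lv v)).re| ≤ A * R := le_trans (Complex.abs_re_le_norm _) hFv
    have him : |(F (lv v)).im| ≤ A * R := le_trans (Complex.abs_im_le_norm _) hFv
    rw [hT, Finset.mem_product]
    rw [abs_le] at hre him
    constructor <;> rw [Finset.mem_Icc] <;> constructor
    · exact Int.floor_le_floor (by apply div_le_div_of_nonneg_right ?_ hs0.le; exact hre.1)
    · exact Int.floor_le_floor (by apply div_le_div_of_nonneg_right ?_ hs0.le; exact hre.2)
    · exact Int.floor_le_floor (by apply div_le_div_of_nonneg_right ?_ hs0.le; exact him.1)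
    · exact Int.floor_le_floor (by apply div_le_div_of_nonneg_right ?_ hs0.le; exact him.2)
  obtain ⟨v, hv, w, hw, hvw, hgvw⟩ := Finset.exists_ne_map_eq_of_card_lt_of_maps_to hTcard hmaps
  -- the difference vector
  have hre : ⌊(F (lv v)).re / s⌋ = ⌊(F (lv w)).re / s⌋ := congrArg Prod.fst hgvw
  have him : ⌊(F (lv v)).im / s⌋ = ⌊(F (lv w)).im / s⌋ := congrArg Prod.snd hgvw
  set b : Fin n → ℤ := fun i => (v i : ℤ) - (w i : ℤ) with hbdef
  have hb0 : b ≠ 0 := by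
    intro h
    apply hvw
    funext i
    have := congrFun h i
    simp only [hbdef, Pi.zero_apply, sub_eq_zero] at this
    exact_mod_cast this
  have hsub : latticeVec n b = lv v - lv w := by
    ext i
    simp only [latticeVec, hlv, hbdef, PiLp.sub_apply, PiLp.toLp_apply]
    push_cast
    ring
  have hF : F (latticeVec n b) = F (lv v) - F (lv w) := by rw [hsub, map_sub]
  have hbound : ∀ p q : ℝ, ⌊p / s⌋ = ⌊q / s⌋ → |p - q| ≤ s := by
    intro p q hpq
    have h1 : |p/s - q/s| < 1 := floor_eq_abs_sub_lt _ _ hpq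
    have h2 : p - q = (p/s - q/s) * s := by field_simp
    rw [h2, abs_mul, abs_of_pos hs0]
    calc |p/s - q/s| * s ≤ 1 * s := mul_le_mul_of_nonneg_right h1.le hs0.le
      _ = s := one_mul s
  have hre' : |(F (latticeVec n b)).re| ≤ s := by
    have h3 : (F (latticeVec n b)).re = (F (lv v)).re - (F (lv w)).re := by
      rw [hF, Complex.sub_re]
    rw [h3]
    exact hbound _ _ hre
  have him' : |(F (latticeVec n b)).im| ≤ s := by
    have h3 : (F (latticeVec n b)).im = (F (lv v)).im - (F (lv w)).im := by
      rw [hF, Complex.sub_im]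
    rw [h3]
    exact hbound _ _ him
  have habs : ‖F (latticeVec n b)‖ ≤ δ := by
    calc ‖F (latticeVec n b)‖
        ≤ |(F (latticeVec n b)).re| + |(F (latticeVec n b)).im| :=
          Complex.norm_le_abs_re_add_abs_im _
      _ ≤ s + s := add_le_add hre' him'
      _ = δ := by rw [hs]; ring
  have hpos : 0 < ‖F (latticeVec n b)‖ :=
    norm_pos_iff.mpr fun h => hb0 (hker b h)
  have hbi : ∀ i, |b i| ≤ (M:ℤ) := by
    intro i
    have hv1 : v i < M + 1 := by
      have : v i ∈ Finset.range (M+1) := (Fintype.mem_piFinset.mp (hS ▸ hv)) i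
      exact Finset.mem_range.mp this
    have hw1 : w i < M + 1 := by
      have : w i ∈ Finset.range (M+1) := (Fintype.mem_piFinset.mp (hS ▸ hw)) i
      exact Finset.mem_range.mp this
    simp only [hbdef]
    rw [abs_le]
    omega
  have hnb : ‖latticeVec n b‖ ≤ Real.sqrt n * M := latticeVec_norm_le n M b hbi
  refine ⟨b, hb0, ?_, hpos, habs⟩
  have hxeq : x = K ^ e * δ ^ (-e) := by
    rw [hx, Real.div_rpow hK0.le hδ0.le, Real.rpow_neg hδ0.le, div_eq_mul_inv]
  have hexp : -2 / ((n:ℝ) - 2) = -e := by rw [he]; ring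
  have hrhs : 2 * Real.sqrt n * K ^ e * δ ^ (-2 / ((n:ℝ) - 2)) = 2 * Real.sqrt n * x := by
    rw [hexp, hxeq]; ring
  rw [hrhs]
  have hsq : (0:ℝ) ≤ Real.sqrt n := Real.sqrt_nonneg _
  calc ‖latticeVec n b‖ ≤ Real.sqrt n * M := hnb
    _ ≤ Real.sqrt n * (x + 1) := mul_le_mul_of_nonneg_left hMx hsq
    _ ≤ Real.sqrt n * (2 * x) := mul_le_mul_of_nonneg_left (by linarith) hsq
    _ = 2 * Real.sqrt n * x := by ring
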